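/- arXiv:2409.04100 — 5 statements merged into one kernel-verified Lean document; each statement's English description precedes it below -/
import Mathlib

section
/- Let F be the mixture CDF F = (1 - π₁)F₀ + π₁F₁, where F₀ and F₁ are CDFs on ℝ and π₁ ∈ [0,1], and define π₁̲ = inf{ γ ∈ (0,1] : (F - (1-γ)F₀)/γ is a CDF }. Then π₁̲ = π₁ - sup{ 0 ≤ ε ≤ 1 : π₁F₁ - εF₀ is a sub-CDF (i.e. a nondecreasing, right-continuous, nonnegative function with limit 0 at -∞ and limit at most 1 at +∞) }. -/
open Filter MeasureTheory Set

/-- A CDF: nondecreasing, right-continuous, with limit 0 at -∞ and 1 at +∞. -/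
def IsCDF (G : ℝ → ℝ) : Prop :=
  Monotone G ∧ (∀ x, ContinuousWithinAt G (Set.Ici x) x) ∧
    Tendsto G atBot (nhds 0) ∧ Tendsto G atTop (nhds 1)

/-- A sub-CDF: nondecreasing, right-continuous, nonnegative, with limit 0 at -∞ and
limit at most 1 at +∞. -/
def IsSubCDF (G : ℝ → ℝ) : Prop :=
  Monotone G ∧ (∀ x, ContinuousWithinAt G (Set.Ici x) x) ∧ (∀ x, 0 ≤ G x) ∧
    Tendsto G atBot (nhds 0) ∧ ∃ l, l ≤ 1 ∧ Tendsto G atTop (nhds l)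

/-- Patra–Sen identity: the identifiable lower bound `π₁̲` equals
`π₁ - sup{ 0 ≤ ε ≤ 1 : π₁ F₁ - ε F₀ is a sub-CDF }`. -/
theorem pi1_lower_eq_sub_subCDF
    (F₀ F₁ : ℝ → ℝ) (hF₀ : IsCDF F₀) (hF₁ : IsCDF F₁)
    (π₁ : ℝ) (hπ₁ : π₁ ∈ Set.Icc (0 : ℝ) 1)
    (F : ℝ → ℝ) (hF : ∀ x, F x = (1 - π₁) * F₀ x + π₁ * F₁ x) :
    sInf {γ : ℝ | γ ∈ Set.Ioc (0 : ℝ) 1 ∧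
        IsCDF (fun x => (F x - (1 - γ) * F₀ x) / γ)} =
      π₁ - sSup {ε : ℝ | ε ∈ Set.Icc (0 : ℝ) 1 ∧
        IsSubCDF (fun x => π₁ * F₁ x - ε * F₀ x)} := by
  obtain ⟨hπ0, hπle⟩ := hπ₁
  obtain ⟨m₀, rc₀, b₀, t₀⟩ := hF₀
  obtain ⟨m₁, rc₁, b₁, t₁⟩ := hF₁
  set B : Set ℝ := {ε : ℝ | ε ∈ Set.Icc (0 : ℝ) 1 ∧
      IsSubCDF (fun x => π₁ * F₁ x - ε * F₀ x)} with hBdef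
  set A : Set ℝ := {γ : ℝ | γ ∈ Set.Ioc (0 : ℝ) 1 ∧
      IsCDF (fun x => (F x - (1 - γ) * F₀ x) / γ)} with hAdef
  have hbot : ∀ ε : ℝ, Tendsto (fun x => π₁ * F₁ x - ε * F₀ x) atBot (nhds 0) := by
    intro ε
    have h := (b₁.const_mul π₁).sub (b₀.const_mul ε)
    simpa using h
  have htop : ∀ ε : ℝ, Tendsto (fun x => π₁ * F₁ x - ε * F₀ x) atTop (nhds (π₁ - ε)) := by
    intro ε
    have h := (t₁.const_mul π₁).sub (t₀.const_mul ε)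
    simpa using h
  have hrc : ∀ (ε : ℝ) (x : ℝ),
      ContinuousWithinAt (fun x => π₁ * F₁ x - ε * F₀ x) (Set.Ici x) x := by
    intro ε x
    exact (continuousWithinAt_const.mul (rc₁ x)).sub (continuousWithinAt_const.mul (rc₀ x))
  have hnn : ∀ ε : ℝ, Monotone (fun x => π₁ * F₁ x - ε * F₀ x) →
      ∀ x, 0 ≤ π₁ * F₁ x - ε * F₀ x := by
    intro ε hm x
    refine le_of_tendsto (hbot ε) ?_
    filter_upwards [eventually_le_atBot x] with y hy
    exact hm hy
  have hlepi : ∀ ε : ℝ, Monotone (fun x => π₁ * F₁ x - ε * F₀ x) → ε ≤ π₁ := by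
    intro ε hm
    have h := ge_of_tendsto (htop ε) (Eventually.of_forall (hnn ε hm))
    linarith
  have hBmem : ∀ ε : ℝ, ε ∈ B ↔ 0 ≤ ε ∧ Monotone (fun x => π₁ * F₁ x - ε * F₀ x) := by
    intro ε
    constructor
    · rintro ⟨⟨h0, -⟩, hm, -⟩
      exact ⟨h0, hm⟩
    · rintro ⟨h0, hm⟩
      exact ⟨⟨h0, (hlepi ε hm).trans hπle⟩, hm, hrc ε, hnn ε hm, hbot ε,
        ⟨π₁ - ε, by linarith, htop ε⟩⟩
  have keyfun : ∀ γ : ℝ, (fun x => (F x - (1 - γ) * F₀ x) / γ)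
      = (fun x => (π₁ * F₁ x - (π₁ - γ) * F₀ x) / γ) := by
    intro γ
    funext x
    rw [hF]
    ring
  have hAmem : ∀ γ : ℝ, γ ∈ A ↔ (0 < γ ∧ γ ≤ 1) ∧
      Monotone (fun x => π₁ * F₁ x - (π₁ - γ) * F₀ x) := by
    intro γ
    constructor
    · rintro ⟨⟨hγ0, hγ1⟩, hcdf⟩
      rw [keyfun] at hcdf
      obtain ⟨hm, -, -, -⟩ := hcdf
      refine ⟨⟨hγ0, hγ1⟩, ?_⟩
      intro x y hxy
      have := hm hxy
      exact (div_le_div_iff_of_pos_right hγ0).mp this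
    · rintro ⟨⟨hγ0, hγ1⟩, hm⟩
      refine ⟨⟨hγ0, hγ1⟩, ?_⟩
      rw [keyfun]
      refine ⟨?_, ?_, ?_, ?_⟩
      · intro x y hxy
        exact (div_le_div_iff_of_pos_right hγ0).mpr (hm hxy)
      · intro x
        exact (hrc (π₁ - γ) x).div_const γ
      · have h := (hbot (π₁ - γ)).div_const γ
        simpa using h
      · have h := (htop (π₁ - γ)).div_const γ
        have : (π₁ - (π₁ - γ)) / γ = 1 := by
          field_simp
          ring
        rwa [this] at h
  have hB0 : (0 : ℝ) ∈ B := by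
    rw [hBmem]
    refine ⟨le_refl 0, ?_⟩
    intro x y hxy
    have := mul_le_mul_of_nonneg_left (m₁ hxy) hπ0
    simp only
    linarith
  have hBbdd : BddAbove B := ⟨1, fun ε hε => hε.1.2⟩
  set s := sSup B with hsdef
  have hs0 : 0 ≤ s := le_csSup hBbdd hB0
  have hsπ : s ≤ π₁ := csSup_le ⟨0, hB0⟩ (fun ε hε => hlepi ε ((hBmem ε).mp hε).2)
  have hsmono : Monotone (fun x => π₁ * F₁ x - s * F₀ x) := by
    intro x y hxy
    simp only
    have hc : 0 ≤ F₀ y - F₀ x := sub_nonneg.mpr (m₀ hxy)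
    have key : s * (F₀ y - F₀ x) ≤ π₁ * (F₁ y - F₁ x) := by
      rcases eq_or_lt_of_le hc with h0 | hpos
      · have h1 : 0 ≤ π₁ * (F₁ y - F₁ x) := mul_nonneg hπ0 (sub_nonneg.mpr (m₁ hxy))
        rw [← h0, mul_zero]
        exact h1
      · have hsle : s ≤ π₁ * (F₁ y - F₁ x) / (F₀ y - F₀ x) := by
          apply csSup_le ⟨0, hB0⟩
          intro ε hε
          have hm := ((hBmem ε).mp hε).2
          have h2 := hm hxy
          simp only at h2
          rw [le_div_iff₀ hpos]
          nlinarith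
        calc s * (F₀ y - F₀ x)
            ≤ (π₁ * (F₁ y - F₁ x) / (F₀ y - F₀ x)) * (F₀ y - F₀ x) :=
              mul_le_mul_of_nonneg_right hsle hc
          _ = π₁ * (F₁ y - F₁ x) := div_mul_cancel₀ _ (ne_of_gt hpos)
    linarith
  have hAmem' : ∀ γ : ℝ, 0 < γ → γ ≤ 1 → π₁ - s ≤ γ → γ ∈ A := by
    intro γ h0 h1 hγ
    rw [hAmem]
    refine ⟨⟨h0, h1⟩, ?_⟩
    intro x y hxy
    have h2 := hsmono hxy
    simp only at h2 ⊢
    have h3 := mul_le_mul_of_nonneg_left (m₀ hxy) (by linarith : (0:ℝ) ≤ s - (π₁ - γ))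
    have hring : ∀ z : ℝ, π₁ * F₁ z - (π₁ - γ) * F₀ z
        = (π₁ * F₁ z - s * F₀ z) + (s - (π₁ - γ)) * F₀ z := fun z => by ring
    rw [hring x, hring y]
    exact add_le_add h2 h3
  have hAbdd : BddBelow A := ⟨0, fun γ hγ => hγ.1.1.le⟩
  have hA1 : (1 : ℝ) ∈ A := hAmem' 1 one_pos le_rfl (by linarith)
  have hlow : π₁ - s ≤ sInf A := by
    apply le_csInf ⟨1, hA1⟩
    intro γ hγ
    rw [hAmem] at hγ
    obtain ⟨⟨hγ0, hγ1⟩, hm⟩ := hγ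
    rcases le_or_gt γ π₁ with h | h
    · have hmem : π₁ - γ ∈ B := (hBmem _).mpr ⟨by linarith, hm⟩
      have := le_csSup hBbdd hmem
      linarith
    · linarith
  have hup : sInf A ≤ π₁ - s := by
    rcases lt_or_eq_of_le hsπ with h | h
    · exact csInf_le hAbdd (hAmem' (π₁ - s) (by linarith) (by linarith) le_rfl)
    · have hps : π₁ - s = 0 := by linarith
      rw [hps]
      apply le_of_forall_pos_le_add
      intro δ hδ
      have hmem : min δ 1 ∈ A :=
        hAmem' (min δ 1) (lt_min hδ one_pos) (min_le_right _ _) (by rw [hps]; positivity)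
      have := csInf_le hAbdd hmem
      have := min_le_left δ 1
      linarith
  exact le_antisymm hup hlow
end

section
/- Let F = (1 - π₁)F₀ + π₁F₁ with π₁ ∈ (0,1], where F₀ and F₁ are absolutely continuous CDFs with densities f₀ and f₁, and define π₁̲ = inf{ γ ∈ (0,1] : (F - (1-γ)F₀)/γ is a CDF }. Then π₁̲ < π₁ if and only if there exists c > 0 such that f₁(x) ≥ c·f₀(x) for Lebesgue-almost every x. -/
open Filter MeasureTheory Set

lemma integrableOn_Iic_of_cdf {F f : ℝ → ℝ}
    (hd : ∀ x, F x = ∫ t in Set.Iic x, f t) (htop : Tendsto F atTop (nhds 1)) :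
    ∀ x, MeasureTheory.IntegrableOn f (Set.Iic x) := by
  intro x
  by_contra hni
  have hzero : ∀ y ≥ x, F y = 0 := by
    intro y hy
    rw [hd y, MeasureTheory.integral_undef]
    exact fun h => hni (MeasureTheory.IntegrableOn.mono_set h (Set.Iic_subset_Iic.2 hy))
  have h0 : Tendsto F atTop (nhds 0) := by
    refine Tendsto.congr' ?_ tendsto_const_nhds
    filter_upwards [eventually_ge_atTop x] with y hy
    exact (hzero y hy).symm
  exact one_ne_zero (tendsto_nhds_unique htop h0)

lemma locIntegrable_of_integrableOn_Iic {f : ℝ → ℝ}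
    (h : ∀ x, MeasureTheory.IntegrableOn f (Set.Iic x)) :
    MeasureTheory.LocallyIntegrable f volume := fun x =>
  ⟨Set.Iic (x + 1), Iic_mem_nhds (by linarith), h (x + 1)⟩

lemma integral_Iic_add_Ioc {f : ℝ → ℝ} (h : ∀ x, MeasureTheory.IntegrableOn f (Set.Iic x))
    {x y : ℝ} (hxy : x ≤ y) :
    (∫ t in Set.Iic y, f t) = (∫ t in Set.Iic x, f t) + ∫ t in Set.Ioc x y, f t := by
  rw [← Set.Iic_union_Ioc_eq_Iic hxy,
    MeasureTheory.setIntegral_union (Set.Iic_disjoint_Ioc le_rfl) measurableSet_Ioc (h x)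
      ((h y).mono_set Set.Ioc_subset_Iic_self)]

/-- If all integrals over `Ioc` intervals are nonnegative, the function is a.e. nonnegative. -/
lemma ae_nonneg_of_setIntegral_Ioc_nonneg {g : ℝ → ℝ}
    (hg : MeasureTheory.LocallyIntegrable g volume)
    (h : ∀ x y : ℝ, x ≤ y → 0 ≤ ∫ t in Set.Ioc x y, g t) :
    ∀ᵐ x ∂(volume : Measure ℝ), 0 ≤ g x := by
  filter_upwards [IsUnifLocDoublingMeasure.ae_tendsto_average (μ := volume) hg 1] with x hx
  have hT : Tendsto (fun r : ℝ => ⨍ y in Metric.closedBall x r, g y) (nhdsWithin 0 (Set.Ioi 0))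
      (nhds (g x)) := by
    refine hx (fun _ : ℝ => x) id tendsto_id ?_
    filter_upwards [self_mem_nhdsWithin] with r (hr : 0 < r)
    simpa [Metric.mem_closedBall] using by linarith
  refine ge_of_tendsto hT ?_
  filter_upwards [self_mem_nhdsWithin] with r (hr : 0 < r)
  rw [MeasureTheory.setAverage_eq]
  have h1 : (0:ℝ) ≤ ∫ y in Metric.closedBall x r, g y := by
    rw [Real.closedBall_eq_Icc, MeasureTheory.integral_Icc_eq_integral_Ioc]
    exact h _ _ (by linarith)
  exact smul_nonneg (by positivity) h1

/-- `π₁̲ < π₁` if and only if there is `c > 0` with `f₁ ≥ c f₀` Lebesgue-a.e. -/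
theorem pi1_lower_lt_iff
    (F₀ F₁ : ℝ → ℝ) (hF₀ : IsCDF F₀) (hF₁ : IsCDF F₁)
    (f₀ f₁ : ℝ → ℝ) (hf₀ : ∀ x, 0 ≤ f₀ x) (hf₁ : ∀ x, 0 ≤ f₁ x)
    (hf₀meas : Measurable f₀) (hf₁meas : Measurable f₁)
    (hd₀ : ∀ x, F₀ x = ∫ t in Set.Iic x, f₀ t)
    (hd₁ : ∀ x, F₁ x = ∫ t in Set.Iic x, f₁ t)
    (π₁ : ℝ) (hπ₁ : π₁ ∈ Set.Ioc (0 : ℝ) 1)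
    (F : ℝ → ℝ) (hF : ∀ x, F x = (1 - π₁) * F₀ x + π₁ * F₁ x) :
    sInf {γ : ℝ | γ ∈ Set.Ioc (0 : ℝ) 1 ∧
        IsCDF (fun x => (F x - (1 - γ) * F₀ x) / γ)} < π₁ ↔
      ∃ c : ℝ, 0 < c ∧ ∀ᵐ x ∂(volume : Measure ℝ), c * f₀ x ≤ f₁ x := by
  obtain ⟨hπ0, hπle1⟩ := hπ₁
  set S : Set ℝ := {γ : ℝ | γ ∈ Set.Ioc (0 : ℝ) 1 ∧
      IsCDF (fun x => (F x - (1 - γ) * F₀ x) / γ)} with hS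
  have hi₀ := integrableOn_Iic_of_cdf hd₀ hF₀.2.2.2
  have hi₁ := integrableOn_Iic_of_cdf hd₁ hF₁.2.2.2
  -- rewriting the candidate CDF
  have hfun : ∀ γ : ℝ, (fun x => (F x - (1 - γ) * F₀ x) / γ)
      = fun x => ((γ - π₁) * F₀ x + π₁ * F₁ x) / γ := by
    intro γ; funext x; rw [hF x]; ring_nf
  have hπS : π₁ ∈ S := by
    refine ⟨⟨hπ0, hπle1⟩, ?_⟩
    have : (fun x => (F x - (1 - π₁) * F₀ x) / π₁) = F₁ := by
      funext x; rw [hF x]; field_simp; ring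
    rw [this]; exact hF₁
  have hbdd : BddBelow S := ⟨0, fun γ hγ => le_of_lt hγ.1.1⟩
  constructor
  · intro hlt
    have hex : ∃ γ ∈ S, γ < π₁ := by
      by_contra hcon
      push_neg at hcon
      exact absurd (le_csInf ⟨π₁, hπS⟩ hcon) (not_le.2 hlt)
    obtain ⟨γ, hγS, hγlt⟩ := hex
    have hγ0 : (0:ℝ) < γ := hγS.1.1
    have hmono : Monotone (fun x => ((γ - π₁) * F₀ x + π₁ * F₁ x) / γ) := by
      rw [← hfun]; exact hγS.2.1
    set g : ℝ → ℝ := fun t => π₁ * f₁ t - (π₁ - γ) * f₀ t with hg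
    have hgi : ∀ x, MeasureTheory.IntegrableOn g (Set.Iic x) :=
      fun x => ((hi₁ x).const_mul π₁).sub ((hi₀ x).const_mul (π₁ - γ))
    have hkey : ∀ x y : ℝ, x ≤ y → 0 ≤ ∫ t in Set.Ioc x y, g t := by
      intro x y hxy
      have h1 := hmono hxy
      have h2 : (γ - π₁) * F₀ x + π₁ * F₁ x ≤ (γ - π₁) * F₀ y + π₁ * F₁ y := by
        have := (div_le_div_iff_of_pos_right hγ0).mp h1
        linarith
      have e0 := integral_Iic_add_Ioc hi₀ hxy
      have e1 := integral_Iic_add_Ioc hi₁ hxy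
      rw [hd₀ x, hd₀ y, hd₁ x, hd₁ y, e0, e1] at h2
      have eg : (∫ t in Set.Ioc x y, g t)
          = π₁ * (∫ t in Set.Ioc x y, f₁ t) - (π₁ - γ) * ∫ t in Set.Ioc x y, f₀ t := by
        rw [hg, MeasureTheory.integral_sub (((hi₁ y).mono_set Set.Ioc_subset_Iic_self).const_mul π₁)
          (((hi₀ y).mono_set Set.Ioc_subset_Iic_self).const_mul (π₁ - γ)),
          MeasureTheory.integral_const_mul, MeasureTheory.integral_const_mul]
      rw [eg]; linarith
    have hae := ae_nonneg_of_setIntegral_Ioc_nonneg (locIntegrable_of_integrableOn_Iic hgi) hkey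
    refine ⟨(π₁ - γ) / π₁, div_pos (by linarith) hπ0, ?_⟩
    filter_upwards [hae] with t ht
    have ht' : 0 ≤ π₁ * f₁ t - (π₁ - γ) * f₀ t := ht
    rw [div_mul_eq_mul_div, div_le_iff₀ hπ0, mul_comm (f₁ t) π₁]
    linarith
  · rintro ⟨c, hc0, hc⟩
    set c' : ℝ := min c 1 with hc'
    have hc'0 : 0 < c' := lt_min hc0 one_pos
    have hc'le : c' ≤ 1 := min_le_right _ _
    set γ : ℝ := π₁ * (1 - c' / 2) with hγ
    have hγ0 : 0 < γ := by
      apply mul_pos hπ0; linarith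
    have hγlt : γ < π₁ := by
      have : π₁ * (1 - c' / 2) < π₁ * 1 := by
        apply mul_lt_mul_of_pos_left _ hπ0; linarith
      simpa [hγ] using this
    have hγS : γ ∈ S := by
      refine ⟨⟨hγ0, le_trans hγlt.le hπle1⟩, ?_⟩
      rw [hfun γ]
      refine ⟨?_, ?_, ?_, ?_⟩
      · -- Monotone
        intro x y hxy
        simp only
        have hIoc : (π₁ - γ) * (∫ t in Set.Ioc x y, f₀ t)
            ≤ π₁ * ∫ t in Set.Ioc x y, f₁ t := by
          calc (π₁ - γ) * (∫ t in Set.Ioc x y, f₀ t)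
              = ∫ t in Set.Ioc x y, (π₁ - γ) * f₀ t := by
                rw [MeasureTheory.integral_const_mul]
            _ ≤ ∫ t in Set.Ioc x y, π₁ * f₁ t := by
                refine MeasureTheory.integral_mono_ae
                  (((hi₀ y).mono_set Set.Ioc_subset_Iic_self).const_mul (π₁ - γ))
                  (((hi₁ y).mono_set Set.Ioc_subset_Iic_self).const_mul π₁) ?_
                refine MeasureTheory.ae_restrict_of_ae ?_
                filter_upwards [hc] with t ht
                have h1 : c' * f₀ t ≤ f₁ t :=
                  le_trans (mul_le_mul_of_nonneg_right (min_le_left c 1) (hf₀ t)) ht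
                have h2 : π₁ - γ = π₁ * (c' / 2) := by rw [hγ]; ring
                nlinarith [hf₀ t, mul_le_mul_of_nonneg_left h1 hπ0.le]
            _ = π₁ * ∫ t in Set.Ioc x y, f₁ t := by
                rw [MeasureTheory.integral_const_mul]
        have e0 := integral_Iic_add_Ioc hi₀ hxy
        have e1 := integral_Iic_add_Ioc hi₁ hxy
        have hnum : (γ - π₁) * F₀ x + π₁ * F₁ x ≤ (γ - π₁) * F₀ y + π₁ * F₁ y := by
          rw [hd₀ x, hd₀ y, hd₁ x, hd₁ y, e0, e1]; nlinarith
        rw [div_le_div_iff₀ hγ0 hγ0]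
        exact mul_le_mul_of_nonneg_right hnum hγ0.le
      · intro x
        exact (((continuousWithinAt_const.mul (hF₀.2.1 x)).add
          (continuousWithinAt_const.mul (hF₁.2.1 x))).div_const γ)
      · have : Tendsto (fun x => ((γ - π₁) * F₀ x + π₁ * F₁ x) / γ) atBot
            (nhds (((γ - π₁) * 0 + π₁ * 0) / γ)) :=
          ((tendsto_const_nhds.mul hF₀.2.2.1).add (tendsto_const_nhds.mul hF₁.2.2.1)).div_const γ
        simpa using this
      · have : Tendsto (fun x => ((γ - π₁) * F₀ x + π₁ * F₁ x) / γ) atTop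
            (nhds (((γ - π₁) * 1 + π₁ * 1) / γ)) :=
          ((tendsto_const_nhds.mul hF₀.2.2.2).add (tendsto_const_nhds.mul hF₁.2.2.2)).div_const γ
        have hval : ((γ - π₁) * 1 + π₁ * 1) / γ = 1 := by field_simp; ring
        rwa [hval] at this
    calc sInf S ≤ γ := csInf_le hbdd hγS
      _ < π₁ := hγlt
end

section
/- Let P₁, P₂, … be a sequence of p-values (random variables) with common continuous CDF F and empirical CDF Fₙ(x) = (1/n)·#{ i ≤ n : Pᵢ ≤ x }. Assume (I) the sequence (P₁, P₂, …) is strongly stationary, and (II) for every x, Fₙ(x) → F(x) in probability as n → ∞. Then ‖Fₙ - F‖_∞ = sup_x |Fₙ(x) - F(x)| → 0 almost surely as n → ∞. -/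
open Filter MeasureTheory Set ProbabilityTheory

/-- Empirical CDF of the first `n` among a sequence of random variables. -/
noncomputable def empCDF {Ω : Type*} (P : ℕ → Ω → ℝ) (n : ℕ) (ω : Ω) (x : ℝ) : ℝ :=
  (((Finset.range n).filter (fun i => P i ω ≤ x)).card : ℝ) / (n : ℝ)

open Topology

set_option linter.unusedSectionVars false
set_option linter.unusedVariables false
set_option maxHeartbeats 1000000

section Birkhoff

variable {α : Type*} [MeasurableSpace α]

noncomputable def birkS (T : α → α) (u : α → ℝ) (k : ℕ) (a : α) : ℝ :=
  ∑ i ∈ Finset.range k, u (T^[i] a)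

noncomputable def maxS (T : α → α) (u : α → ℝ) : ℕ → α → ℝ
  | 0, _ => 0
  | (n+1), a => max (maxS T u n a) (birkS T u (n+1) a)

variable {T : α → α} {u : α → ℝ}

lemma birkS_succ (k : ℕ) (a : α) :
    birkS T u (k+1) a = u a + birkS T u k (T a) := by
  unfold birkS
  rw [Finset.sum_range_succ']
  simp [Function.iterate_succ_apply, add_comm]

lemma maxS_nonneg (n : ℕ) (a : α) : 0 ≤ maxS T u n a := by
  induction n with
  | zero => simp [maxS]
  | succ n ih => exact le_trans ih (le_max_left _ _)

lemma birkS_le_maxS {k n : ℕ} (hk : k ≤ n) (a : α) :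
    birkS T u k a ≤ maxS T u n a := by
  induction n with
  | zero =>
    interval_cases k
    simp [birkS, maxS]
  | succ n ih =>
    rcases Nat.lt_or_ge k (n+1) with h | h
    · exact le_trans (ih (Nat.lt_succ_iff.mp h)) (le_max_left _ _)
    · have : k = n + 1 := le_antisymm hk h
      subst this
      exact le_max_right _ _

lemma maxS_pos_eq {n : ℕ} {a : α} (h : 0 < maxS T u n a) :
    ∃ k, 1 ≤ k ∧ k ≤ n ∧ maxS T u n a = birkS T u k a := by
  induction n with
  | zero => simp [maxS] at h
  | succ n ih =>
    rcases le_total (birkS T u (n+1) a) (maxS T u n a) with hle | hle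
    · have hmax : maxS T u (n+1) a = maxS T u n a := max_eq_left hle
      rw [hmax] at h ⊢
      obtain ⟨k, h1, h2, h3⟩ := ih h
      exact ⟨k, h1, h2.trans (Nat.le_succ n), h3⟩
    · exact ⟨n+1, Nat.succ_le_succ (Nat.zero_le n), le_refl _,
        max_eq_right hle⟩

lemma measurable_birkS (hT : Measurable T) (hu : Measurable u) (k : ℕ) :
    Measurable (birkS T u k) := by
  apply Finset.measurable_sum
  intro i _
  exact hu.comp (hT.iterate i)

lemma measurable_maxS (hT : Measurable T) (hu : Measurable u) (n : ℕ) :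
    Measurable (maxS T u n) := by
  induction n with
  | zero => exact measurable_const
  | succ n ih => exact ih.max (measurable_birkS hT hu (n+1))

lemma abs_birkS_le {C : ℝ} (hC : ∀ a, |u a| ≤ C) (k : ℕ) (a : α) :
    |birkS T u k a| ≤ k * C := by
  calc |birkS T u k a| ≤ ∑ i ∈ Finset.range k, |u (T^[i] a)| :=
        Finset.abs_sum_le_sum_abs _ _
    _ ≤ ∑ _i ∈ Finset.range k, C := Finset.sum_le_sum fun i _ => hC _
    _ = k * C := by simp [Finset.sum_const, nsmul_eq_mul]

lemma abs_maxS_le {C : ℝ} (hC : ∀ a, |u a| ≤ C) (n : ℕ) (a : α) :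
    |maxS T u n a| ≤ n * C + 1 := by
  have hC0 : 0 ≤ C := le_trans (abs_nonneg _) (hC a)
  induction n with
  | zero => simp [maxS]
  | succ n ih =>
    have h1 : |birkS T u (n+1) a| ≤ ((n:ℝ)+1) * C := by
      have := abs_birkS_le (T := T) hC (n+1) a
      push_cast at this
      exact this
    have h2 : maxS T u (n+1) a = max (maxS T u n a) (birkS T u (n+1) a) := rfl
    have h3 := abs_le.mp ih
    have h4 := abs_le.mp h1
    rw [h2, abs_le]
    push_cast
    constructor
    · rw [le_max_iff]
      left; linarith [h3.1]
    · rw [max_le_iff]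
      exact ⟨by linarith [h3.2], by linarith [h4.2]⟩


lemma integrable_of_bdd {μ : Measure α} [IsFiniteMeasure μ] {f : α → ℝ} {C : ℝ}
    (hf : Measurable f) (h : ∀ a, |f a| ≤ C) : Integrable f μ := by
  refine (integrable_const C).mono' hf.aestronglyMeasurable ?_
  exact ae_of_all _ fun a => by simpa using h a

/-- Garsia's maximal ergodic lemma. -/
lemma maximal_setIntegral {μ : Measure α} [IsProbabilityMeasure μ]
    (hT : MeasurePreserving T μ μ) (hu : Measurable u) {C : ℝ}
    (hC : ∀ a, |u a| ≤ C) (n : ℕ) :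
    0 ≤ ∫ a in {a | 0 < maxS T u n a}, u a ∂μ := by
  set E : Set α := {a | 0 < maxS T u n a} with hEdef
  have hM : Measurable (maxS T u n) := measurable_maxS hT.measurable hu n
  have hE : MeasurableSet E := measurableSet_lt measurable_const hM
  have hMint : Integrable (maxS T u n) μ := integrable_of_bdd hM (abs_maxS_le hC n)
  have hMT : Measurable (fun a => maxS T u n (T a)) := hM.comp hT.measurable
  have hMTint : Integrable (fun a => maxS T u n (T a)) μ :=
    integrable_of_bdd hMT (fun a => abs_maxS_le hC n (T a))
  have huint : Integrable u μ := integrable_of_bdd hu hC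
  have step1 : ∀ a ∈ E, maxS T u n a - maxS T u n (T a) ≤ u a := by
    intro a ha
    obtain ⟨k, hk1, hkn, hke⟩ := maxS_pos_eq ha
    obtain ⟨k, rfl⟩ : ∃ m, k = m + 1 := ⟨k-1, (Nat.succ_pred_eq_of_pos hk1).symm⟩
    have h2 : birkS T u k (T a) ≤ maxS T u n (T a) :=
      birkS_le_maxS (Nat.le_of_succ_le hkn) (T a)
    rw [hke, birkS_succ]
    linarith
  have step2 : ∫ a in E, (maxS T u n a - maxS T u n (T a)) ∂μ ≤ ∫ a in E, u a ∂μ :=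
    setIntegral_mono_on (hMint.sub hMTint).integrableOn huint.integrableOn hE step1
  have step3 : ∫ a in E, (maxS T u n a - maxS T u n (T a)) ∂μ
      = (∫ a in E, maxS T u n a ∂μ) - ∫ a in E, maxS T u n (T a) ∂μ :=
    integral_sub hMint.integrableOn hMTint.integrableOn
  have step4 : ∫ a in E, maxS T u n a ∂μ = ∫ a, maxS T u n a ∂μ := by
    have h0 : ∫ a in Eᶜ, maxS T u n a ∂μ = 0 := by
      have heq : EqOn (maxS T u n) (fun _ => (0:ℝ)) Eᶜ := by
        intro a ha
        exact le_antisymm (not_lt.mp ha) (maxS_nonneg n a)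
      rw [setIntegral_congr_fun hE.compl heq]
      simp
    rw [← integral_add_compl hE hMint, h0, add_zero]
  have step5 : ∫ a in E, maxS T u n (T a) ∂μ ≤ ∫ a, maxS T u n (T a) ∂μ :=
    setIntegral_le_integral hMTint (ae_of_all _ fun a => maxS_nonneg n (T a))
  have step6 : ∫ a, maxS T u n (T a) ∂μ = ∫ a, maxS T u n a ∂μ := by
    conv_rhs => rw [← hT.map_eq]
    rw [integral_map hT.measurable.aemeasurable hM.aestronglyMeasurable]
  linarith


/-- Maximal ergodic inequality in measure form. -/
lemma maximal_measure {μ : Measure α} [IsProbabilityMeasure μ]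
    (hT : MeasurePreserving T μ μ) {h : α → ℝ} (hmeas : Measurable h) {C : ℝ}
    (hb : ∀ a, |h a| ≤ C) (h0 : ∀ a, 0 ≤ h a) {ε : ℝ} (hε : 0 < ε) :
    μ {a | ∃ k, 1 ≤ k ∧ ε < birkS T h k a / k}
      ≤ ENNReal.ofReal ((∫ a, h a ∂μ) / ε) := by
  set u : α → ℝ := fun a => h a - ε with hudef
  have hu : Measurable u := hmeas.sub measurable_const
  have hub : ∀ a, |u a| ≤ C + |ε| := fun a =>
    (abs_sub _ _).trans (add_le_add (hb a) le_rfl)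
  have hbirk : ∀ (k : ℕ) (a : α), birkS T u k a = birkS T h k a - k * ε := by
    intro k a
    simp only [birkS, hudef, Finset.sum_sub_distrib, Finset.sum_const,
      Finset.card_range, nsmul_eq_mul]
  have hD : {a | ∃ k, 1 ≤ k ∧ ε < birkS T h k a / k}
      = ⋃ n, {a | 0 < maxS T u n a} := by
    ext a
    simp only [mem_setOf_eq, mem_iUnion]
    constructor
    · rintro ⟨k, hk1, hk2⟩
      refine ⟨k, lt_of_lt_of_le ?_ (birkS_le_maxS le_rfl a)⟩
      have hkpos : (0:ℝ) < k := by exact_mod_cast hk1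
      rw [lt_div_iff₀ hkpos] at hk2
      rw [hbirk]
      linarith
    · rintro ⟨n, hn⟩
      obtain ⟨k, hk1, _, hke⟩ := maxS_pos_eq hn
      refine ⟨k, hk1, ?_⟩
      have hkpos : (0:ℝ) < k := by exact_mod_cast hk1
      rw [hke, hbirk] at hn
      rw [lt_div_iff₀ hkpos]
      linarith
  have hmono : Monotone (fun n => {a : α | 0 < maxS T u n a}) := by
    have : ∀ n : ℕ, {a : α | 0 < maxS T u n a} ⊆ {a : α | 0 < maxS T u (n+1) a} := by
      intro n a ha
      have h1 : maxS T u (n+1) a = max (maxS T u n a) (birkS T u (n+1) a) := rfl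
      show 0 < maxS T u (n+1) a
      rw [h1]
      exact lt_of_lt_of_le ha (le_max_left _ _)
    exact monotone_nat_of_le_succ this
  have hint_h : Integrable h μ := integrable_of_bdd hmeas hb
  have hbound : ∀ n, μ {a | 0 < maxS T u n a}
      ≤ ENNReal.ofReal ((∫ a, h a ∂μ) / ε) := by
    intro n
    set E : Set α := {a | 0 < maxS T u n a}
    have key : 0 ≤ ∫ a in E, u a ∂μ := maximal_setIntegral hT hu hub n
    have hsplit : ∫ a in E, u a ∂μ
        = (∫ a in E, h a ∂μ) - (μ E).toReal * ε := by
      have := integral_sub (hint_h.integrableOn (s := E))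
        ((integrable_const ε).integrableOn (s := E))
      simp only [hudef] at this ⊢
      rw [this, setIntegral_const, smul_eq_mul, measureReal_def]
    have hle : ∫ a in E, h a ∂μ ≤ ∫ a, h a ∂μ :=
      setIntegral_le_integral hint_h (ae_of_all _ h0)
    have htoReal : (μ E).toReal ≤ (∫ a, h a ∂μ) / ε := by
      rw [le_div_iff₀ hε]
      linarith
    calc μ E = ENNReal.ofReal (μ E).toReal :=
          (ENNReal.ofReal_toReal (measure_ne_top μ E)).symm
      _ ≤ _ := ENNReal.ofReal_le_ofReal htoReal
  rw [hD]
  refine le_of_tendsto (tendsto_measure_iUnion_atTop hmono) ?_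
  exact Eventually.of_forall hbound


noncomputable def bavg (T : α → α) (g : α → ℝ) (n : ℕ) (a : α) : ℝ :=
  birkS T g n a / n

lemma bavg_decomp (hg0 : ∀ y, 0 ≤ g y) (hg1 : ∀ y, g y ≤ 1) {N n : ℕ}
    (hN : 1 ≤ N) (hn : N ≤ n) (c : ℝ) (a : α) :
    |bavg T g n a - c| ≤
      birkS T (fun y => |bavg T g N y - c|) n a / n + N / n := by
  have hn1 : 1 ≤ n := hN.trans hn
  have hn0 : (0:ℝ) < n := by exact_mod_cast hn1
  have hN0 : (0:ℝ) < N := by exact_mod_cast hN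
  set S : ℕ → ℝ := fun j => ∑ i ∈ Finset.Ico j (j+n), g (T^[i] a) with hSdef
  have hSj : ∀ j, S j = ∑ i ∈ Finset.Ico j (j+n), g (T^[i] a) := fun j => rfl
  have hS0 : S 0 = birkS T g n a := by
    rw [hSj 0, zero_add, birkS, Finset.range_eq_Ico]
  -- each S j for j ≤ n is within j of S 0
  have claim1 : ∀ j, j ≤ n → |S j - S 0| ≤ j := by
    intro j hj
    have hsplit1 : (∑ i ∈ Finset.Ico j n, g (T^[i] a))
        + ∑ i ∈ Finset.Ico n (j+n), g (T^[i] a) = S j := by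
      rw [hSj j]
      exact Finset.sum_Ico_consecutive _ hj (by omega)
    have hsplit2 : (∑ i ∈ Finset.Ico 0 j, g (T^[i] a))
        + ∑ i ∈ Finset.Ico j n, g (T^[i] a) = S 0 := by
      rw [hSj 0, zero_add]
      exact Finset.sum_Ico_consecutive _ (Nat.zero_le j) hj
    have hb1 : 0 ≤ ∑ i ∈ Finset.Ico n (j+n), g (T^[i] a) :=
      Finset.sum_nonneg fun i _ => hg0 _
    have hb2 : (∑ i ∈ Finset.Ico n (j+n), g (T^[i] a)) ≤ j := by
      calc (∑ i ∈ Finset.Ico n (j+n), g (T^[i] a))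
          ≤ ∑ _i ∈ Finset.Ico n (j+n), (1:ℝ) :=
            Finset.sum_le_sum fun i _ => hg1 _
        _ = ((j:ℝ)) := by
            simp [Finset.sum_const, Nat.card_Ico]
    have hb3 : 0 ≤ ∑ i ∈ Finset.Ico 0 j, g (T^[i] a) :=
      Finset.sum_nonneg fun i _ => hg0 _
    have hb4 : (∑ i ∈ Finset.Ico 0 j, g (T^[i] a)) ≤ j := by
      calc (∑ i ∈ Finset.Ico 0 j, g (T^[i] a))
          ≤ ∑ _i ∈ Finset.Ico 0 j, (1:ℝ) :=
            Finset.sum_le_sum fun i _ => hg1 _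
        _ = ((j:ℝ)) := by
            simp [Finset.sum_const, Nat.card_Ico]
    rw [abs_le]
    constructor <;> linarith
  -- sum of shifted averages
  have hsum : ∑ i ∈ Finset.range n, bavg T g N (T^[i] a)
      = (∑ j ∈ Finset.range N, S j) / N := by
    unfold bavg birkS
    rw [← Finset.sum_div]
    congr 1
    rw [Finset.sum_comm' (s := Finset.range n) (t := fun _ => Finset.range N)
      (t' := Finset.range N) (s' := fun _ => Finset.range n) (by simp [and_comm])]
    apply Finset.sum_congr rfl
    intro j _
    rw [hSj j, Finset.sum_Ico_eq_sum_range]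
    simp only [Nat.add_sub_cancel_left]
    apply Finset.sum_congr rfl
    intro i _
    rw [Function.iterate_add_apply]
  -- the triangle inequality chain, multiplied by n
  have key : |birkS T g n a - n * c| ≤
      (∑ i ∈ Finset.range n, |bavg T g N (T^[i] a) - c|) + N := by
    have e1 : birkS T g n a - n * c
        = (∑ i ∈ Finset.range n, (bavg T g N (T^[i] a) - c))
          + (∑ j ∈ Finset.range N, (S 0 - S j)) / N := by
      rw [Finset.sum_sub_distrib, Finset.sum_const, Finset.card_range,
        nsmul_eq_mul, hsum, Finset.sum_sub_distrib, Finset.sum_const,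
        Finset.card_range, nsmul_eq_mul, sub_div, hS0]
      field_simp
      ring
    rw [e1]
    refine (abs_add_le _ _).trans (add_le_add ?_ ?_)
    · exact Finset.abs_sum_le_sum_abs _ _
    · rw [abs_div, abs_of_pos hN0, div_le_iff₀ hN0]
      calc |∑ j ∈ Finset.range N, (S 0 - S j)|
          ≤ ∑ j ∈ Finset.range N, |S 0 - S j| := Finset.abs_sum_le_sum_abs _ _
        _ ≤ ∑ j ∈ Finset.range N, (j:ℝ) := by
            refine Finset.sum_le_sum fun j hj => ?_
            rw [abs_sub_comm]
            exact claim1 j (le_trans (le_of_lt (Finset.mem_range.mp hj)) hn)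
        _ ≤ ∑ _j ∈ Finset.range N, (N:ℝ) := by
            refine Finset.sum_le_sum fun j hj => ?_
            exact_mod_cast le_of_lt (Finset.mem_range.mp hj)
        _ = N * N := by simp [Finset.sum_const, mul_comm]
  -- divide by n
  have e2 : bavg T g n a - c = (birkS T g n a - n * c) / n := by
    unfold bavg
    field_simp
  have hbirkh : birkS T (fun y => |bavg T g N y - c|) n a
      = ∑ i ∈ Finset.range n, |bavg T g N (T^[i] a) - c| := rfl
  rw [e2, abs_div, abs_of_pos hn0, ← add_div, hbirkh]
  gcongr


lemma bavg_nonneg (hg0 : ∀ y, 0 ≤ g y) (k : ℕ) (y : α) : 0 ≤ bavg T g k y :=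
  div_nonneg (Finset.sum_nonneg fun i _ => hg0 _) (Nat.cast_nonneg k)

lemma bavg_le_one (hg0 : ∀ y, 0 ≤ g y) (hg1 : ∀ y, g y ≤ 1) (k : ℕ) (y : α) :
    bavg T g k y ≤ 1 := by
  rcases Nat.eq_zero_or_pos k with rfl | hk
  · simp [bavg, birkS]
  · have hk0 : (0:ℝ) < k := by exact_mod_cast hk
    rw [bavg, div_le_one hk0]
    calc birkS T g k y ≤ ∑ _i ∈ Finset.range k, (1:ℝ) :=
          Finset.sum_le_sum fun i _ => hg1 _
      _ = k := by simp

/-- Pointwise a.e. convergence of Birkhoff averages towards a constant,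
given L¹-smallness of some averaged stage. -/
lemma ae_tendsto_bavg {μ : Measure α} [IsProbabilityMeasure μ]
    (hT : MeasurePreserving T μ μ) (hg : Measurable g)
    (hg0 : ∀ y, 0 ≤ g y) (hg1 : ∀ y, g y ≤ 1) (c : ℝ)
    (hL1 : ∀ δ : ℝ, 0 < δ → ∃ N, 1 ≤ N ∧ ∫ a, |bavg T g N a - c| ∂μ ≤ δ) :
    ∀ᵐ a ∂μ, Tendsto (fun n => bavg T g n a) atTop (𝓝 c) := by
  set G : ℕ → Set α := fun m =>
    {a | ∀ N0 : ℕ, ∃ n, N0 ≤ n ∧ 1/((m:ℝ)+1) < |bavg T g n a - c|} with hGdef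
  suffices hG : ∀ m, μ (G m) = 0 by
    rw [ae_iff]
    refine measure_mono_null (fun a ha => ?_) (measure_iUnion_null hG)
    simp only [mem_setOf_eq] at ha
    rw [mem_iUnion]
    by_contra hc
    push_neg at hc
    apply ha
    rw [Metric.tendsto_atTop]
    intro ε hε
    obtain ⟨m, hm⟩ := exists_nat_one_div_lt hε
    have hcm := hc m
    simp only [hGdef, mem_setOf_eq, not_forall, not_exists, not_and, not_lt] at hcm
    obtain ⟨N0, hN0⟩ := hcm
    exact ⟨N0, fun n hn => lt_of_le_of_lt (by rw [Real.dist_eq]; exact hN0 n hn) hm⟩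
  intro m
  set ε : ℝ := 1/((m:ℝ)+1) with hεdef
  have hε : 0 < ε := by positivity
  have hbound : ∀ δ : ℝ, 0 < δ → μ (G m) ≤ ENNReal.ofReal δ := by
    intro δ hδ
    obtain ⟨N, hN1, hNint⟩ := hL1 (δ * ε / 2) (by positivity)
    set h : α → ℝ := fun y => |bavg T g N y - c| with hhdef
    have hhm : Measurable h :=
      (((measurable_birkS hT.measurable hg N).div_const _).sub measurable_const).abs
    have hh0 : ∀ y, 0 ≤ h y := fun y => abs_nonneg _
    have hhb : ∀ y, |h y| ≤ 1 + |c| := by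
      intro y
      rw [abs_abs]
      refine (abs_sub _ _).trans (add_le_add ?_ le_rfl)
      rw [abs_of_nonneg (bavg_nonneg hg0 N y)]
      exact bavg_le_one hg0 hg1 N y
    have hmax := maximal_measure hT hhm hhb hh0 (half_pos hε)
    have hsub : G m ⊆ {a | ∃ k, 1 ≤ k ∧ ε/2 < birkS T h k a / k} := by
      intro a ha
      obtain ⟨n, hn1, hn2⟩ := ha (max N ⌈2*(N:ℝ)/ε⌉₊)
      have hnN : N ≤ n := le_trans (le_max_left _ _) hn1
      have hn0 : (0:ℝ) < n := by
        have : 1 ≤ n := hN1.trans hnN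
        exact_mod_cast this
      have hNn : (N:ℝ)/n ≤ ε/2 := by
        have h1 : 2*(N:ℝ)/ε ≤ n := by
          refine le_trans (Nat.le_ceil _) ?_
          exact_mod_cast le_trans (le_max_right N _) hn1
        rw [div_le_iff₀ hn0]
        rw [div_le_iff₀ hε] at h1
        nlinarith
      have hdec := bavg_decomp (T := T) hg0 hg1 hN1 hnN c a
      refine ⟨n, hN1.trans hnN, ?_⟩
      have : ε < birkS T h n a / n + N / n := lt_of_lt_of_le hn2 hdec
      linarith
    calc μ (G m) ≤ μ {a | ∃ k, 1 ≤ k ∧ ε/2 < birkS T h k a / k} :=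
          measure_mono hsub
      _ ≤ ENNReal.ofReal ((∫ a, h a ∂μ) / (ε/2)) := hmax
      _ ≤ ENNReal.ofReal δ := by
          refine ENNReal.ofReal_le_ofReal ?_
          rw [div_le_iff₀ (half_pos hε)]
          calc ∫ a, h a ∂μ ≤ δ * ε / 2 := hNint
            _ = δ * (ε/2) := by ring
  by_contra hne
  have hpos : 0 < (μ (G m)).toReal :=
    ENNReal.toReal_pos hne (measure_ne_top μ _)
  have hhalf := hbound ((μ (G m)).toReal / 2) (by linarith)
  have h3 : (μ (G m)).toReal ≤ (μ (G m)).toReal / 2 := by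
    have h4 := ENNReal.toReal_mono ENNReal.ofReal_ne_top hhalf
    rwa [ENNReal.toReal_ofReal (by linarith)] at h4
  linarith


end Birkhoff

section Shift

/-- The left shift on sequence space. -/
def shft : (ℕ → ℝ) → (ℕ → ℝ) := fun f i => f (i+1)

lemma measurable_shft : Measurable shft :=
  measurable_pi_lambda _ fun i => measurable_pi_apply (i+1)

lemma shft_iterate (i : ℕ) (f : ℕ → ℝ) (j : ℕ) : (shft^[i] f) j = f (j + i) := by
  induction i generalizing f j with
  | zero => rfl
  | succ i ih =>
    rw [Function.iterate_succ_apply, ih]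
    rfl

end Shift

section EmpCDF
variable {Ω : Type*} [MeasurableSpace Ω] {P : ℕ → Ω → ℝ}

lemma empCDF_eq_sum (P : ℕ → Ω → ℝ) (n : ℕ) (ω : Ω) (x : ℝ) :
    empCDF P n ω x = (∑ i ∈ Finset.range n, if P i ω ≤ x then (1:ℝ) else 0) / n := by
  unfold empCDF
  congr 1
  rw [Finset.card_filter]
  push_cast
  rfl

lemma measurable_empCDF (hmeas : ∀ i, Measurable (P i)) (n : ℕ) (x : ℝ) :
    Measurable (fun ω => empCDF P n ω x) := by
  simp only [empCDF_eq_sum]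
  refine (Finset.measurable_sum _ fun i _ => ?_).div_const _
  exact Measurable.ite (measurableSet_le (hmeas i) measurable_const)
    measurable_const measurable_const

lemma empCDF_eq_bavg (P : ℕ → Ω → ℝ) (n : ℕ) (ω : Ω) (x : ℝ) :
    empCDF P n ω x
      = bavg shft (fun f => if f 0 ≤ x then (1:ℝ) else 0) n (fun i => P i ω) := by
  rw [empCDF_eq_sum, bavg, birkS]
  congr 1
  apply Finset.sum_congr rfl
  intro i _
  rw [shft_iterate i (fun i => P i ω) 0]
  simp

lemma empCDF_nonneg (P : ℕ → Ω → ℝ) (n : ℕ) (ω : Ω) (x : ℝ) : 0 ≤ empCDF P n ω x :=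
  div_nonneg (Nat.cast_nonneg _) (Nat.cast_nonneg _)

lemma empCDF_le_one (P : ℕ → Ω → ℝ) (n : ℕ) (ω : Ω) (x : ℝ) : empCDF P n ω x ≤ 1 := by
  unfold empCDF
  rcases Nat.eq_zero_or_pos n with rfl | hn
  · simp
  · have hn0 : (0:ℝ) < n := by exact_mod_cast hn
    rw [div_le_one hn0]
    exact_mod_cast (Finset.card_filter_le _ _).trans (le_of_eq (Finset.card_range n))

lemma empCDF_mono (P : ℕ → Ω → ℝ) (n : ℕ) (ω : Ω) : Monotone (fun x => empCDF P n ω x) := by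
  intro x y hxy
  show empCDF P n ω x ≤ empCDF P n ω y
  unfold empCDF
  have hcard : (((Finset.range n).filter (fun i => P i ω ≤ x)).card : ℝ)
      ≤ (((Finset.range n).filter (fun i => P i ω ≤ y)).card : ℝ) := by
    have hsub : (Finset.range n).filter (fun i => P i ω ≤ x)
        ⊆ (Finset.range n).filter (fun i => P i ω ≤ y) := by
      intro i hi
      rw [Finset.mem_filter] at hi ⊢
      exact ⟨hi.1, hi.2.trans hxy⟩
    exact_mod_cast Finset.card_le_card hsub
  rcases Nat.eq_zero_or_pos n with rfl | hn
  · simp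
  · exact (div_le_div_iff_of_pos_right (by exact_mod_cast hn)).mpr hcard

end EmpCDF

section PerX
variable {Ω : Type*} [MeasurableSpace Ω]

/-- Pointwise (in `x`) almost-sure convergence of the empirical CDF. -/
lemma ae_tendsto_empCDF (Pr : Measure Ω) [IsProbabilityMeasure Pr]
    (P : ℕ → Ω → ℝ) (hmeas : ∀ i, Measurable (P i))
    (F : ℝ → ℝ)
    (hcdf : ∀ i x, (Pr {ω | P i ω ≤ x}).toReal = F x)
    (hstat : Measure.map (fun ω => (fun i => P i ω : ℕ → ℝ)) Pr =
      Measure.map (fun ω => (fun i => P (i + 1) ω : ℕ → ℝ)) Pr)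
    (hconv : ∀ x : ℝ, TendstoInMeasure Pr (fun n ω => empCDF P n ω x) atTop
      (fun _ => F x)) (x : ℝ) :
    ∀ᵐ ω ∂Pr, Tendsto (fun n => empCDF P n ω x) atTop (𝓝 (F x)) := by
  -- sequence space setup
  set seq : Ω → (ℕ → ℝ) := fun ω i => P i ω with hseqdef
  have hseq : Measurable seq := measurable_pi_lambda _ hmeas
  set μ : Measure (ℕ → ℝ) := Pr.map seq with hμdef
  haveI : IsProbabilityMeasure μ := Measure.isProbabilityMeasure_map hseq.aemeasurable
  have hMP : MeasurePreserving shft μ μ := by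
    refine ⟨measurable_shft, ?_⟩
    rw [hμdef, Measure.map_map measurable_shft hseq]
    have : shft ∘ seq = (fun ω => (fun i => P (i + 1) ω : ℕ → ℝ)) := rfl
    rw [this, ← hstat]
  set g : (ℕ → ℝ) → ℝ := fun f => if f 0 ≤ x then (1:ℝ) else 0 with hgdef
  have hgmeas : Measurable g := by
    refine Measurable.ite ?_ measurable_const measurable_const
    exact measurableSet_le (measurable_pi_apply 0) measurable_const
  have hg0 : ∀ y, 0 ≤ g y := by
    intro y; rw [hgdef]; dsimp only; split <;> norm_num
  have hg1 : ∀ y, g y ≤ 1 := by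
    intro y; rw [hgdef]; dsimp only; split <;> norm_num
  -- bounds on F x
  have hFx0 : 0 ≤ F x := by rw [← hcdf 0 x]; exact ENNReal.toReal_nonneg
  have hFx1 : F x ≤ 1 := by
    rw [← hcdf 0 x]
    have := prob_le_one (μ := Pr) (s := {ω | P 0 ω ≤ x})
    exact ENNReal.toReal_mono ENNReal.one_ne_top this |>.trans (by simp)
  -- the L¹ smallness input
  have hL1 : ∀ δ : ℝ, 0 < δ → ∃ N, 1 ≤ N ∧ ∫ a, |bavg shft g N a - F x| ∂μ ≤ δ := by
    intro δ hδ
    have h1 := tendstoInMeasure_iff_dist.mp (hconv x) (δ/2) (by linarith)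
    have h2 : ∀ᶠ n in atTop,
        Pr {ω | δ/2 ≤ dist (empCDF P n ω x) (F x)} < ENNReal.ofReal (δ/4) :=
      h1.eventually_lt_const (ENNReal.ofReal_pos.mpr (by linarith))
    obtain ⟨N, hN1, hNsmall⟩ := ((eventually_ge_atTop 1).and h2).exists
    set bad : Set Ω := {ω | δ/2 ≤ dist (empCDF P N ω x) (F x)} with hbaddef
    have hbadmeas : MeasurableSet bad := by
      apply measurableSet_le measurable_const
      exact (measurable_empCDF hmeas N x).dist measurable_const
    have hbadsmall : (Pr bad).toReal ≤ δ/4 :=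
      ENNReal.toReal_le_of_le_ofReal (by linarith) hNsmall.le
    refine ⟨N, hN1, ?_⟩
    have hmeasN : Measurable (fun a => |bavg shft g N a - F x|) :=
      (((measurable_birkS measurable_shft hgmeas N).div_const _).sub
        measurable_const).abs
    have hint : ∫ a, |bavg shft g N a - F x| ∂μ
        = ∫ ω, |empCDF P N ω x - F x| ∂Pr := by
      rw [hμdef, integral_map hseq.aemeasurable hmeasN.aestronglyMeasurable]
      apply integral_congr_ae
      apply ae_of_all
      intro ω
      show |bavg shft g N (seq ω) - F x| = |empCDF P N ω x - F x|
      rw [empCDF_eq_bavg]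
    rw [hint]
    have hptwise : ∀ ω, |empCDF P N ω x - F x|
        ≤ δ/2 + bad.indicator (fun _ => (2:ℝ)) ω := by
      intro ω
      by_cases hω : ω ∈ bad
      · rw [indicator_of_mem hω]
        have h1 := empCDF_nonneg P N ω x
        have h2 := empCDF_le_one P N ω x
        rw [abs_le]
        constructor <;> linarith
      · rw [indicator_of_notMem hω, add_zero]
        rw [hbaddef, mem_setOf_eq, not_le, Real.dist_eq] at hω
        exact le_of_lt hω
    have hb1 : ∀ ω, |empCDF P N ω x - F x| ≤ 2 := by
      intro ω
      have h1 := empCDF_nonneg P N ω x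
      have h2 := empCDF_le_one P N ω x
      rw [abs_le]; constructor <;> linarith
    have hintle : ∫ ω, |empCDF P N ω x - F x| ∂Pr
        ≤ ∫ ω, (δ/2 + bad.indicator (fun _ => (2:ℝ)) ω) ∂Pr := by
      refine integral_mono ?_ ?_ hptwise
      · exact integrable_of_bdd
          (((measurable_empCDF hmeas N x).sub measurable_const).abs)
          (fun ω => by rw [abs_abs]; exact hb1 ω)
      · exact (integrable_const _).add ((integrable_const (2:ℝ)).indicator hbadmeas)
    have hcalc : ∫ ω, (δ/2 + bad.indicator (fun _ => (2:ℝ)) ω) ∂Pr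
        = δ/2 + (Pr bad).toReal * 2 := by
      rw [integral_add (integrable_const _)
        ((integrable_const (2:ℝ)).indicator hbadmeas)]
      rw [integral_const, integral_indicator_const _ hbadmeas]
      simp [smul_eq_mul, measureReal_def]
    rw [hcalc] at hintle
    linarith
  -- apply the ergodic result and transfer back
  have hae := ae_tendsto_bavg hMP hgmeas hg0 hg1 (F x) hL1
  rw [ae_iff] at hae ⊢
  have hset : {ω | ¬ Tendsto (fun n => empCDF P n ω x) atTop (𝓝 (F x))}
      = seq ⁻¹' {a | ¬ Tendsto (fun n => bavg shft g n a) atTop (𝓝 (F x))} := by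
    ext ω
    simp only [mem_setOf_eq, mem_preimage]
    have : (fun n => empCDF P n ω x) = (fun n => bavg shft g n (seq ω)) := by
      funext n
      rw [empCDF_eq_bavg]
    rw [this]
  rw [hset]
  refine le_antisymm ?_ zero_le
  calc Pr (seq ⁻¹' _) ≤ μ _ := Measure.le_map_apply hseq.aemeasurable _
    _ = 0 := hae

end PerX

/-- Deterministic Glivenko–Cantelli grid bound. -/
lemma grid_bound (Fn F : ℝ → ℝ) (hFn_mono : Monotone Fn)
    (hFn0 : ∀ x, 0 ≤ Fn x) (hFn1 : ∀ x, Fn x ≤ 1)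
    (hF_mono : Monotone F)
    (hF0 : ∀ x, 0 ≤ F x) (hF1 : ∀ x, F x ≤ 1)
    {m : ℕ} (hm : 1 ≤ m) (t : ℕ → ℝ)
    (ht : ∀ j : ℕ, 1 ≤ j → j ≤ m - 1 → F (t j) = (j:ℝ) / m)
    {δ : ℝ} (hδ : 0 ≤ δ)
    (hnear : ∀ j : ℕ, 1 ≤ j → j ≤ m - 1 → |Fn (t j) - F (t j)| ≤ δ)
    (x : ℝ) : |Fn x - F x| ≤ δ + 1/m := by
  have hm0 : (0:ℝ) < m := by exact_mod_cast hm
  have h1m : 0 < 1/(m:ℝ) := by positivity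
  rw [abs_sub_le_iff]
  constructor
  · -- Fn x - F x ≤ δ + 1/m
    by_cases hc : 1 - 1/(m:ℝ) ≤ F x
    · have := hFn1 x; linarith
    · push_neg at hc
      set k := ⌊(m:ℝ) * F x⌋₊ with hk
      have hFx0 := hF0 x
      have hk1 : (k:ℝ) ≤ m * F x := Nat.floor_le (by positivity)
      have hk2 : (m:ℝ) * F x < k + 1 := Nat.lt_floor_add_one _
      have hkm : k + 1 ≤ m - 1 := by
        have hstep : (m:ℝ) * F x < m - 1 := by
          have h2 := mul_lt_mul_of_pos_left hc hm0
          rw [mul_sub, mul_one_div_cancel (ne_of_gt hm0), mul_one] at h2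
          linarith
        have h3 : (k:ℝ) < (m:ℝ) - 1 := lt_of_le_of_lt hk1 hstep
        have h4 : k < m - 1 := by
          have h5 : (k:ℝ) < ((m - 1 : ℕ) : ℝ) := by
            rwa [Nat.cast_sub hm, Nat.cast_one]
          exact_mod_cast h5
        omega
      have hj1 : 1 ≤ k + 1 := Nat.succ_le_succ (Nat.zero_le k)
      have hFt : F (t (k+1)) = ((k:ℝ)+1)/m := by
        rw [ht (k+1) hj1 hkm]; push_cast; ring
      have hgt : F x < F (t (k+1)) := by
        rw [hFt, lt_div_iff₀ hm0]; nlinarith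
      have hxt : x ≤ t (k+1) := by
        by_contra hcon
        push_neg at hcon
        exact absurd (hF_mono (le_of_lt hcon)) (not_le.mpr hgt)
      have h5 : Fn x ≤ Fn (t (k+1)) := hFn_mono hxt
      have h6 := (abs_le.mp (hnear (k+1) hj1 hkm)).2
      have h7 : ((k:ℝ)+1)/m ≤ F x + 1/m := by
        rw [div_le_iff₀ hm0]
        have hexp : (F x + 1/(m:ℝ))*m = F x * m + 1 := by field_simp
        rw [hexp]
        linarith [mul_comm (F x) (m:ℝ)]
      rw [hFt] at h6
      linarith
  · -- F x - Fn x ≤ δ + 1/m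
    by_cases hc : F x ≤ 1/(m:ℝ)
    · have := hFn0 x; linarith
    · push_neg at hc
      set k := ⌈(m:ℝ) * F x⌉₊ with hk
      have hFx0 := hF0 x
      have hk1 : (m:ℝ) * F x ≤ k := Nat.le_ceil _
      have hk2 : (k:ℝ) < m * F x + 1 := by
        refine Nat.ceil_lt_add_one ?_
        positivity
      have hmfx : (1:ℝ) < m * F x := by
        have h8 : 1/(m:ℝ) * m < F x * m := by
          exact mul_lt_mul_of_pos_right hc hm0
        rw [one_div_mul_cancel (ne_of_gt hm0)] at h8
        linarith [h8, mul_comm (F x) (m:ℝ)]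
      have hk2' : 2 ≤ k := by
        have h9 : (1:ℝ) < (k:ℝ) := lt_of_lt_of_le hmfx hk1
        have : 1 < k := by exact_mod_cast h9
        omega
      set j := k - 1 with hjdef
      have hj1 : 1 ≤ j := by omega
      have hjc : (j:ℝ) = (k:ℝ) - 1 := by
        rw [hjdef, Nat.cast_sub (by omega), Nat.cast_one]
      have hjlt : (j:ℝ) < m * F x := by rw [hjc]; linarith
      have hjm : j ≤ m - 1 := by
        have hFx1 := hF1 x
        have h10 : (j:ℝ) < (m:ℝ) := by nlinarith
        have : j < m := by exact_mod_cast h10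
        omega
      have hFt : F (t j) = (j:ℝ)/m := ht j hj1 hjm
      have hlt : F (t j) < F x := by
        rw [hFt, div_lt_iff₀ hm0]
        linarith [mul_comm (F x) (m:ℝ)]
      have hxt : t j ≤ x := by
        by_contra hcon
        push_neg at hcon
        exact absurd (hF_mono (le_of_lt hcon)) (not_le.mpr hlt)
      have h5 : Fn (t j) ≤ Fn x := hFn_mono hxt
      have h6 : F (t j) - Fn (t j) ≤ δ := by
        have := (abs_le.mp (hnear j hj1 hjm)).1
        linarith
      have h7 : F x ≤ (j:ℝ)/m + 1/m := by
        have h11 : F x ≤ (k:ℝ)/m := by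
          rw [le_div_iff₀ hm0]
          linarith [mul_comm (F x) (m:ℝ)]
        have h12 : (k:ℝ)/m = (j:ℝ)/m + 1/m := by
          rw [hjc]; ring
        linarith
      linarith

/-- Glivenko–Cantelli under dependence: if the p-values form a strongly stationary
sequence with common continuous CDF `F` and the empirical CDF converges pointwise in
probability to `F`, then `‖Fₙ - F‖_∞ → 0` almost surely. -/
theorem glivenko_cantelli_stationary
    {Ω : Type*} [MeasurableSpace Ω] (Pr : Measure Ω) [IsProbabilityMeasure Pr]
    (P : ℕ → Ω → ℝ) (hmeas : ∀ i, Measurable (P i))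
    (F : ℝ → ℝ) (hFcont : Continuous F)
    (hcdf : ∀ i x, (Pr {ω | P i ω ≤ x}).toReal = F x)
    (hstat : Measure.map (fun ω => (fun i => P i ω : ℕ → ℝ)) Pr =
      Measure.map (fun ω => (fun i => P (i + 1) ω : ℕ → ℝ)) Pr)
    (hconv : ∀ x : ℝ, TendstoInMeasure Pr (fun n ω => empCDF P n ω x) atTop
      (fun _ => F x)) :
    ∀ᵐ ω ∂Pr, Tendsto (fun n : ℕ => ⨆ x : ℝ, |empCDF P n ω x - F x|)
      atTop (nhds 0) := by
  -- basic properties of F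
  have hFmono : Monotone F := by
    intro a b hab
    rw [← hcdf 0 a, ← hcdf 0 b]
    exact ENNReal.toReal_mono (measure_ne_top _ _)
      (measure_mono (fun ω h => le_trans h hab))
  have hF0 : ∀ x, 0 ≤ F x := fun x => (hcdf 0 x) ▸ ENNReal.toReal_nonneg
  have hF1 : ∀ x, F x ≤ 1 := by
    intro x
    rw [← hcdf 0 x]
    exact (ENNReal.toReal_mono ENNReal.one_ne_top prob_le_one).trans (by simp)
  -- F attains every value in (0,1)
  have hlow : ∀ c : ℝ, 0 < c → ∃ a : ℝ, F a < c := by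
    intro c hc
    have hmeas0 : ∀ k : ℕ, MeasurableSet {ω | P 0 ω ≤ -(k:ℝ)} :=
      fun k => measurableSet_le (hmeas 0) measurable_const
    have hanti : Antitone (fun k : ℕ => {ω | P 0 ω ≤ -(k:ℝ)}) := by
      intro k l hkl ω hω
      have : -(l:ℝ) ≤ -(k:ℝ) := by
        have : (k:ℝ) ≤ l := by exact_mod_cast hkl
        linarith
      exact le_trans hω this
    have hempty : ⋂ k : ℕ, {ω | P 0 ω ≤ -(k:ℝ)} = (∅ : Set Ω) := by
      ext ω
      simp only [mem_iInter, mem_setOf_eq, mem_empty_iff_false, iff_false, not_forall]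
      obtain ⟨k, hk⟩ := exists_nat_gt (-(P 0 ω))
      exact ⟨k, by push_neg; linarith⟩
    have htend := tendsto_measure_iInter_atTop (μ := Pr)
      (fun k => (hmeas0 k).nullMeasurableSet) hanti ⟨0, measure_ne_top _ _⟩
    rw [hempty, measure_empty] at htend
    have htoReal : Tendsto (fun k : ℕ => F (-(k:ℝ))) atTop (𝓝 0) := by
      have h2 := (ENNReal.tendsto_toReal (by simp)).comp htend
      simp only [ENNReal.toReal_zero] at h2
      convert h2 using 2 with k
      exact (hcdf 0 (-(k:ℝ))).symm
    obtain ⟨k, hk⟩ := (htoReal.eventually_lt_const hc).exists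
    exact ⟨-(k:ℝ), hk⟩
  have hhigh : ∀ c : ℝ, c < 1 → ∃ b : ℝ, c < F b := by
    intro c hc
    have hmono : Monotone (fun k : ℕ => {ω | P 0 ω ≤ (k:ℝ)}) := by
      intro k l hkl ω hω
      have : (k:ℝ) ≤ l := by exact_mod_cast hkl
      exact le_trans hω this
    have huniv : ⋃ k : ℕ, {ω | P 0 ω ≤ (k:ℝ)} = (univ : Set Ω) := by
      ext ω
      simp only [mem_iUnion, mem_setOf_eq, mem_univ, iff_true]
      obtain ⟨k, hk⟩ := exists_nat_gt (P 0 ω)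
      exact ⟨k, hk.le⟩
    have htend := tendsto_measure_iUnion_atTop (μ := Pr) hmono
    rw [huniv, measure_univ] at htend
    have htoReal : Tendsto (fun k : ℕ => F ((k:ℝ))) atTop (𝓝 1) := by
      have h2 := (ENNReal.tendsto_toReal ENNReal.one_ne_top).comp htend
      simp only [ENNReal.toReal_one] at h2
      convert h2 using 2 with k
      exact (hcdf 0 ((k:ℝ))).symm
    obtain ⟨k, hk⟩ := (htoReal.eventually_const_lt hc).exists
    exact ⟨(k:ℝ), hk⟩
  have hsurj : ∀ c : ℝ, 0 < c → c < 1 → ∃ t : ℝ, F t = c := by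
    intro c h0 h1
    obtain ⟨a, ha⟩ := hlow c h0
    obtain ⟨b, hb⟩ := hhigh c h1
    have hab : a ≤ b := by
      by_contra hcon
      push_neg at hcon
      have := hFmono hcon.le
      linarith
    obtain ⟨u, _, hu⟩ := intermediate_value_Icc hab hFcont.continuousOn ⟨ha.le, hb.le⟩
    exact ⟨u, hu⟩
  -- countable grid
  have hchoice : ∀ q : ℚ, ∃ t : ℝ, (0 < (q:ℝ) ∧ (q:ℝ) < 1) → F t = (q:ℝ) := by
    intro q
    by_cases h : 0 < (q:ℝ) ∧ (q:ℝ) < 1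
    · obtain ⟨t, ht⟩ := hsurj q h.1 h.2
      exact ⟨t, fun _ => ht⟩
    · exact ⟨0, fun hc => absurd hc h⟩
  choose s hsval using hchoice
  -- the a.e. event
  have hae : ∀ᵐ ω ∂Pr, ∀ q : ℚ,
      Tendsto (fun n => empCDF P n ω (s q)) atTop (𝓝 (F (s q))) := by
    rw [ae_all_iff]
    exact fun q => ae_tendsto_empCDF Pr P hmeas F hcdf hstat hconv (s q)
  filter_upwards [hae] with ω hω
  rw [Metric.tendsto_atTop]
  intro ε hε
  obtain ⟨m', hm'⟩ := exists_nat_one_div_lt (show (0:ℝ) < ε/4 by linarith)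
  set m : ℕ := m' + 1 with hmdef
  have hm1 : 1 ≤ m := Nat.succ_le_succ (Nat.zero_le m')
  have hm0 : (0:ℝ) < m := by exact_mod_cast hm1
  have hminv : 1/(m:ℝ) < ε/4 := by
    have : ((m':ℝ)+1) = (m:ℝ) := by push_cast [hmdef]; ring
    rwa [this] at hm'
  set t : ℕ → ℝ := fun j => s ((j : ℚ) / (m:ℚ)) with htdef
  have htval : ∀ j : ℕ, 1 ≤ j → j ≤ m - 1 → F (t j) = (j:ℝ)/m := by
    intro j h1 h2
    have hj0 : (0:ℝ) < j := by exact_mod_cast h1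
    have hjm : (j:ℝ) < m := by
      have : j < m := by omega
      exact_mod_cast this
    have hcast : (((j : ℚ) / (m:ℚ) : ℚ) : ℝ) = (j:ℝ)/(m:ℝ) := by push_cast; ring
    have := hsval ((j : ℚ) / (m:ℚ)) (by
      rw [hcast]
      constructor
      · positivity
      · rw [div_lt_one hm0]; exact hjm)
    rw [htdef]
    dsimp only
    rw [this, hcast]
  -- eventually all grid points are δ-close
  have hall : ∀ᶠ n in atTop, ∀ j ∈ Finset.Icc 1 (m-1),
      |empCDF P n ω (t j) - F (t j)| ≤ ε/4 := by
    rw [eventually_all_finset]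
    intro j _
    have htj := hω ((j : ℚ) / (m:ℚ))
    rw [Metric.tendsto_atTop] at htj
    obtain ⟨N, hN⟩ := htj (ε/4) (by linarith)
    rw [eventually_atTop]
    exact ⟨N, fun n hn => by
      have := hN n hn
      rw [Real.dist_eq] at this
      exact this.le⟩
  obtain ⟨N, hN⟩ := eventually_atTop.mp hall
  refine ⟨N, fun n hn => ?_⟩
  have hbound : ∀ x, |empCDF P n ω x - F x| ≤ ε/4 + 1/m := by
    intro x
    refine grid_bound (fun y => empCDF P n ω y) F (empCDF_mono P n ω)
      (fun y => empCDF_nonneg P n ω y) (fun y => empCDF_le_one P n ω y)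
      hFmono hF0 hF1 hm1 t htval (by linarith) ?_ x
    intro j h1 h2
    exact hN n hn j (Finset.mem_Icc.mpr ⟨h1, h2⟩)
  have hsup : (⨆ x : ℝ, |empCDF P n ω x - F x|) ≤ ε/4 + 1/m :=
    Real.iSup_le hbound (by positivity)
  have hnonneg : 0 ≤ ⨆ x : ℝ, |empCDF P n ω x - F x| :=
    Real.iSup_nonneg (fun x => abs_nonneg _)
  rw [Real.dist_eq, sub_zero, abs_of_nonneg hnonneg]
  calc (⨆ x : ℝ, |empCDF P n ω x - F x|) ≤ ε/4 + 1/m := hsup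
    _ < ε/4 + ε/4 := by linarith
    _ < ε := by linarith
end

section
/- Let F and F₀ be CDFs on ℝ. Then the set Γ = { γ ∈ (0,1] : (F - (1-γ)F₀)/γ is a CDF } is convex; i.e., if γ₁, γ₂ ∈ Γ and α ∈ [0,1], then αγ₁ + (1-α)γ₂ ∈ Γ. -/
open Filter MeasureTheory Set

lemma isCDF_combo (G₁ G₂ : ℝ → ℝ) (h1 : IsCDF G₁) (h2 : IsCDF G₂)
    (a b : ℝ) (ha : 0 ≤ a) (hb : 0 ≤ b) (hab : a + b = 1) :
    IsCDF (fun x => a * G₁ x + b * G₂ x) := by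
  obtain ⟨m1, c1, b1, t1⟩ := h1
  obtain ⟨m2, c2, b2, t2⟩ := h2
  refine ⟨(m1.const_mul ha).add (m2.const_mul hb), fun x =>
    (continuousWithinAt_const.mul (c1 x)).add (continuousWithinAt_const.mul (c2 x)), ?_, ?_⟩
  · have := (b1.const_mul a).add (b2.const_mul b)
    simpa using this
  · have := (t1.const_mul a).add (t2.const_mul b)
    simpa [hab] using this

/-- The set `Γ = { γ ∈ (0,1] : (F - (1-γ)F₀)/γ is a CDF }` is convex. -/
theorem gamma_set_convex (F F₀ : ℝ → ℝ) (hF : IsCDF F) (hF₀ : IsCDF F₀) :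
    Convex ℝ {γ : ℝ | γ ∈ Set.Ioc (0 : ℝ) 1 ∧
      IsCDF (fun x => (F x - (1 - γ) * F₀ x) / γ)} := by
  rintro γ₁ ⟨⟨h1p, h1le⟩, hC1⟩ γ₂ ⟨⟨h2p, h2le⟩, hC2⟩ α β hα hβ hαβ
  have hβ' : β = 1 - α := by linarith
  subst hβ'
  simp only [smul_eq_mul, Set.mem_setOf_eq, Set.mem_Ioc]
  set γ := α * γ₁ + (1 - α) * γ₂ with hγ
  have hγp : 0 < γ := by
    rcases hα.eq_or_lt with h | h
    · simp [hγ, ← h]; nlinarith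
    · nlinarith [mul_pos h h1p, mul_nonneg hβ h2p.le]
  have hγle : γ ≤ 1 := by nlinarith
  refine ⟨⟨hγp, hγle⟩, ?_⟩
  have hkey : (fun x => (F x - (1 - γ) * F₀ x) / γ) =
      (fun x => (α * γ₁ / γ) * ((F x - (1 - γ₁) * F₀ x) / γ₁) +
        ((1 - α) * γ₂ / γ) * ((F x - (1 - γ₂) * F₀ x) / γ₂)) := by
    funext x
    field_simp
    ring
  rw [hkey]
  exact isCDF_combo _ _ hC1 hC2 _ _
    (by positivity) (by positivity)
    (by field_simp; exact hγ.symm)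
end

section
/- Let X₁,…,Xₙ be a sample with empirical CDF Fₙ, let F₀ be the null CDF and F the true CDF, and define π₁̲ = inf{ γ ∈ (0,1] : (F - (1-γ)F₀)/γ is a CDF }. For γ ∈ (0,1] set F̂₁,ₙ(γ) = (Fₙ - (1-γ)F₀)/γ, let F̂₂,ₙ(γ) be the CDF minimizing (1/n)Σᵢ (W(Xᵢ) - F̂₁,ₙ(γ)(Xᵢ))² over all CDFs W, and let dₙ(f,g)² = (1/n)Σᵢ (f(Xᵢ) - g(Xᵢ))². Then for every γ with π₁̲ ≤ γ ≤ 1, γ·dₙ(F̂₁,ₙ(γ), F̂₂,ₙ(γ)) ≤ dₙ(Fₙ, F). -/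
open Filter MeasureTheory Set

/-- Empirical CDF of a finite sample. -/
noncomputable def empCDFfin {n : ℕ} (X : Fin n → ℝ) (x : ℝ) : ℝ :=
  ((Finset.univ.filter (fun i => X i ≤ x)).card : ℝ) / (n : ℝ)

/-- The `L₂(Fₙ)` distance: `dₙ(f,g)² = (1/n)Σᵢ (f(Xᵢ) - g(Xᵢ))²`. -/
noncomputable def dn {n : ℕ} (X : Fin n → ℝ) (f g : ℝ → ℝ) : ℝ :=
  Real.sqrt ((1 / (n : ℝ)) * ∑ i, (f (X i) - g (X i)) ^ 2)

/-- The naive estimator `F̂₁,ₙ(γ) = (Fₙ - (1-γ)F₀)/γ`. -/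
noncomputable def Fhat1 {n : ℕ} (X : Fin n → ℝ) (F₀ : ℝ → ℝ) (γ : ℝ) : ℝ → ℝ :=
  fun x => (empCDFfin X x - (1 - γ) * F₀ x) / γ

/-- Patra–Sen inequality: for every `γ` with `π₁̲ ≤ γ ≤ 1`,
`γ·dₙ(F̂₁,ₙ(γ), F̂₂,ₙ(γ)) ≤ dₙ(Fₙ, F)`, where `F̂₂,ₙ(γ)` is the CDF minimizing the
`dₙ`-distance to `F̂₁,ₙ(γ)`. -/
theorem patra_sen_distance_bound
    (n : ℕ) (X : Fin n → ℝ) (F₀ F : ℝ → ℝ) (hF₀ : IsCDF F₀) (hF : IsCDF F)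
    (Fhat2 : ℝ → ℝ → ℝ)
    (hFhat2 : ∀ γ : ℝ, IsCDF (Fhat2 γ) ∧
      ∀ W : ℝ → ℝ, IsCDF W → dn X (Fhat2 γ) (Fhat1 X F₀ γ) ≤ dn X W (Fhat1 X F₀ γ)) :
    ∀ γ : ℝ,
      sInf {γ' : ℝ | γ' ∈ Set.Ioc (0 : ℝ) 1 ∧
        IsCDF (fun x => (F x - (1 - γ') * F₀ x) / γ')} ≤ γ → γ ≤ 1 →
      γ * dn X (Fhat1 X F₀ γ) (Fhat2 γ) ≤ dn X (empCDFfin X) F := by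
  intro γ hγlow hγ1
  set S := {γ' : ℝ | γ' ∈ Set.Ioc (0 : ℝ) 1 ∧
      IsCDF (fun x => (F x - (1 - γ') * F₀ x) / γ')} with hSdef
  have h1S : (1 : ℝ) ∈ S := by
    refine ⟨⟨one_pos, le_refl 1⟩, ?_⟩
    simpa using hF
  have hSne : S.Nonempty := ⟨1, h1S⟩
  have hγ0 : 0 ≤ γ := le_trans (le_csInf hSne fun a ha => le_of_lt ha.1.1) hγlow
  rcases eq_or_lt_of_le hγ0 with h0 | hpos
  · rw [← h0, zero_mul]
    exact Real.sqrt_nonneg _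
  have hne : γ ≠ 0 := ne_of_gt hpos
  -- monotonicity of F₁,γ
  have hmono : Monotone (fun x => (F x - (1 - γ) * F₀ x) / γ) := by
    intro x y hxy
    have hD0 : 0 ≤ F₀ y - F₀ x := sub_nonneg.2 (hF₀.1 hxy)
    have key : (1 - γ) * (F₀ y - F₀ x) ≤ F y - F x := by
      rcases eq_or_lt_of_le hD0 with hD | hD
      · rw [← hD, mul_zero]
        exact sub_nonneg.2 (hF.1 hxy)
      · apply le_of_forall_pos_le_add
        intro ε hε
        obtain ⟨γ', hγ'S, hγ'lt⟩ :=
          Real.lt_sInf_add_pos hSne (show 0 < ε / (F₀ y - F₀ x) from div_pos hε hD)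
        have hγ'pos : 0 < γ' := hγ'S.1.1
        have hm := hγ'S.2.1 hxy
        have h2 : F x - (1 - γ') * F₀ x ≤ F y - (1 - γ') * F₀ y :=
          (div_le_div_iff_of_pos_right hγ'pos).1 hm
        have h3 : γ' - γ < ε / (F₀ y - F₀ x) := by linarith
        have h4 : (γ' - γ) * (F₀ y - F₀ x) < ε := by
          calc (γ' - γ) * (F₀ y - F₀ x) < ε / (F₀ y - F₀ x) * (F₀ y - F₀ x) :=
                mul_lt_mul_of_pos_right h3 hD
            _ = ε := div_mul_cancel₀ ε (ne_of_gt hD)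
        nlinarith [h2, h4]
    have h5 : F x - (1 - γ) * F₀ x ≤ F y - (1 - γ) * F₀ y := by nlinarith [key]
    exact (div_le_div_iff_of_pos_right hpos).2 h5
  -- F₁,γ is a CDF
  have hcdf : IsCDF (fun x => (F x - (1 - γ) * F₀ x) / γ) := by
    refine ⟨hmono, fun x => ?_, ?_, ?_⟩
    · exact ((hF.2.1 x).sub (continuousWithinAt_const.mul (hF₀.2.1 x))).div_const γ
    · have h := ((hF.2.2.1).sub ((hF₀.2.2.1).const_mul (1 - γ))).div_const γ
      simpa using h
    · have h := ((hF.2.2.2).sub ((hF₀.2.2.2).const_mul (1 - γ))).div_const γ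
      have e : ((1 : ℝ) - (1 - γ) * 1) / γ = 1 := by field_simp; ring
      rwa [e] at h
  -- plug in W = F₁,γ
  have hle := (hFhat2 γ).2 _ hcdf
  have hsymm : dn X (Fhat1 X F₀ γ) (Fhat2 γ) = dn X (Fhat2 γ) (Fhat1 X F₀ γ) := by
    unfold dn
    congr 1
    congr 1
    exact Finset.sum_congr rfl fun i _ => by ring
  have hkey : γ * dn X (fun x => (F x - (1 - γ) * F₀ x) / γ) (Fhat1 X F₀ γ)
      = dn X (empCDFfin X) F := by
    unfold dn Fhat1
    have hterm : ∀ i : Fin n,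
        ((F (X i) - (1 - γ) * F₀ (X i)) / γ - (empCDFfin X (X i) - (1 - γ) * F₀ (X i)) / γ) ^ 2
          = (empCDFfin X (X i) - F (X i)) ^ 2 / γ ^ 2 := fun i => by
      field_simp
      ring
    rw [Finset.sum_congr rfl fun i _ => hterm i, ← Finset.sum_div]
    rw [show (1 : ℝ) / n * ((∑ i : Fin n, (empCDFfin X (X i) - F (X i)) ^ 2) / γ ^ 2)
        = ((1 : ℝ) / n * ∑ i : Fin n, (empCDFfin X (X i) - F (X i)) ^ 2) / γ ^ 2 from by ring]
    rw [Real.sqrt_div (by positivity), Real.sqrt_sq hγ0, mul_comm, div_mul_cancel₀ _ hne]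
  calc γ * dn X (Fhat1 X F₀ γ) (Fhat2 γ)
      = γ * dn X (Fhat2 γ) (Fhat1 X F₀ γ) := by rw [hsymm]
    _ ≤ γ * dn X (fun x => (F x - (1 - γ) * F₀ x) / γ) (Fhat1 X F₀ γ) :=
        mul_le_mul_of_nonneg_left hle hγ0
    _ = dn X (empCDFfin X) F := hkey
end
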